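/- Let k = l + m with l, m ≥ 1, and let σ₁ ∈ S_l, σ₂ ∈ S_m. Then σ₁ ⊕ σ₂ ≤ γ_k in the geodesic order on S_k if and only if σ₁ ≤ γ_l and σ₂ ≤ γ_m. (This is the case σ = (1,…,k) of the paper's Lemma on geodesic factorization, to which the general lemma is reduced.) -/

import Mathlib

open Equiv Equiv.Perm

variable {α β : Type*} [DecidableEq α] [Fintype α]

/-- general same-cycle setoid -/
def scs {α : Type*} (σ : Perm α) : Setoid α :=
  ⟨σ.SameCycle, ⟨fun _ => Equiv.Perm.SameCycle.refl σ _, fun h => h.symm, fun h h' => h.trans h'⟩⟩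

noncomputable def cycN {α : Type*} (σ : Perm α) : ℕ := Nat.card (Quotient (scs σ))

/-- join of a setoid with one extra pair -/
def addPair {α : Type*} (r : Setoid α) (a b : α) : Setoid α where
  r x y := r x y ∨ (r x a ∧ r b y) ∨ (r x b ∧ r a y)
  iseqv := by
    constructor
    · exact fun x => Or.inl (r.refl x)
    · rintro x y (h | ⟨h1, h2⟩ | ⟨h1, h2⟩)
      · exact Or.inl (r.symm h)
      · exact Or.inr (Or.inr ⟨r.symm h2, r.symm h1⟩)
      · exact Or.inr (Or.inl ⟨r.symm h2, r.symm h1⟩)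
    · rintro x y z (h | ⟨h1, h2⟩ | ⟨h1, h2⟩) (h' | ⟨h1', h2'⟩ | ⟨h1', h2'⟩)
      · exact Or.inl (r.trans h h')
      · exact Or.inr (Or.inl ⟨r.trans h h1', h2'⟩)
      · exact Or.inr (Or.inr ⟨r.trans h h1', h2'⟩)
      · exact Or.inr (Or.inl ⟨h1, r.trans h2 h'⟩)
      · exact Or.inl (r.trans (r.trans h1 (r.symm (r.trans h2 h1'))) h2')
      · exact Or.inl (r.trans h1 h2')
      · exact Or.inr (Or.inr ⟨h1, r.trans h2 h'⟩)
      · exact Or.inl (r.trans h1 h2')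
      · exact Or.inl (r.trans (r.trans h1 (r.symm (r.trans h2 h1'))) h2')

theorem le_addPair {α : Type*} (r : Setoid α) (a b : α) : r ≤ addPair r a b :=
  Setoid.le_def.mpr fun h => Or.inl h

theorem addPair_rel_ab {α : Type*} (r : Setoid α) (a b : α) : (addPair r a b) a b :=
  Or.inr (Or.inl ⟨r.refl a, r.refl b⟩)

theorem addPair_le {α : Type*} {r t : Setoid α} {a b : α} (hrt : r ≤ t) (hab : t a b) :
    addPair r a b ≤ t := by
  rintro x y (h | ⟨h1, h2⟩ | ⟨h1, h2⟩)
  · exact hrt h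
  · exact t.trans (hrt h1) (t.trans hab (hrt h2))
  · exact t.trans (hrt h1) (t.trans (t.symm hab) (hrt h2))

theorem addPair_eq_self {α : Type*} {r : Setoid α} {a b : α} (hab : r a b) :
    addPair r a b = r := by
  refine le_antisymm (addPair_le le_rfl hab) (le_addPair r a b)

/-- quotient by a coarser setoid has fewer classes -/
theorem card_quot_le_card_quot {α : Type*} [Finite α] {r t : Setoid α} (h : r ≤ t) :
    Nat.card (Quotient t) ≤ Nat.card (Quotient r) := by
  exact Nat.card_le_card_of_surjective
    (fun q => Quotient.map (fun x => x) (fun x y hxy => h hxy) q)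
    (fun q => Quotient.inductionOn q fun x => ⟨Quotient.mk r x, rfl⟩)

theorem card_addPair {α : Type*} [Finite α] {r : Setoid α} {a b : α} (hab : ¬ r a b) :
    Nat.card (Quotient r) = Nat.card (Quotient (addPair r a b)) + 1 := by
  classical
  set s := addPair r a b with hs
  have wd1 : ∀ x y, r x y →
      (if r x b then (Sum.inr () : Quotient s ⊕ Unit) else Sum.inl (Quotient.mk s x)) =
      (if r y b then (Sum.inr () : Quotient s ⊕ Unit) else Sum.inl (Quotient.mk s y)) := by
    intro x y hxy
    by_cases hxb : r x b
    · have hyb : r y b := r.trans (r.symm hxy) hxb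
      rw [if_pos hxb, if_pos hyb]
    · have hyb : ¬ r y b := fun hyb => hxb (r.trans hxy hyb)
      rw [if_neg hxb, if_neg hyb]
      exact congrArg _ (Quotient.sound (Or.inl hxy))
  have wd2 : ∀ x y, s x y →
      (if r x b then (Quotient.mk r a) else Quotient.mk r x) =
      (if r y b then (Quotient.mk r a) else Quotient.mk r y) := by
    rintro x y (h | ⟨h1, h2⟩ | ⟨h1, h2⟩)
    · by_cases hxb : r x b
      · have hyb : r y b := r.trans (r.symm h) hxb
        rw [if_pos hxb, if_pos hyb]
      · have hyb : ¬ r y b := fun hyb => hxb (r.trans h hyb)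
        rw [if_neg hxb, if_neg hyb]
        exact Quotient.sound h
    · have hyb : r y b := r.symm h2
      have hxb : ¬ r x b := fun hxb => hab (r.trans (r.symm h1) hxb)
      rw [if_neg hxb, if_pos hyb]
      exact Quotient.sound h1
    · have hxb : r x b := h1
      have hyb : ¬ r y b := fun hyb => hab (r.trans h2 hyb)
      rw [if_pos hxb, if_neg hyb]
      exact Quotient.sound h2
  let e : Quotient r ≃ (Quotient s ⊕ Unit) :=
    { toFun := Quotient.lift _ wd1
      invFun := Sum.elim (Quotient.lift _ wd2) (fun _ => Quotient.mk r b)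
      left_inv := by
        refine fun q => Quotient.inductionOn q fun x => ?_
        by_cases hxb : r x b
        · simp only [Quotient.lift_mk, if_pos hxb, Sum.elim_inr]
          exact Quotient.sound (r.symm hxb)
        · simp only [Quotient.lift_mk, if_neg hxb, Sum.elim_inl, if_neg hxb]
      right_inv := by
        rintro (q | u)
        · refine Quotient.inductionOn q fun x => ?_
          by_cases hxb : r x b
          · simp only [Quotient.lift_mk, Sum.elim_inl, if_pos hxb, if_neg hab]
            exact congrArg _ (Quotient.sound (Or.inr (Or.inl ⟨r.refl a, r.symm hxb⟩)))
          · simp only [Quotient.lift_mk, Sum.elim_inl, if_neg hxb]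
        · rcases u
          have hbb : r b b := r.refl b
          simp only [Sum.elim_inr, Quotient.lift_mk, if_pos hbb] }
  rw [Nat.card_congr e, Nat.card_sum]
  simp

section SC
variable {α : Type*} [DecidableEq α] [Fintype α]

theorem sameCycle_swap_mul_le_addPair (ρ : Perm α) (a b : α) {x y : α}
    (h : (Equiv.swap a b * ρ).SameCycle x y) : (addPair (scs ρ) a b) x y := by
  have step : ∀ z : α, (addPair (scs ρ) a b) z ((Equiv.swap a b * ρ) z) := by
    intro z
    by_cases h1 : ρ z = a
    · have : (Equiv.swap a b * ρ) z = b := by simp [Equiv.Perm.mul_apply, h1]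
      rw [this]
      exact Or.inr (Or.inl ⟨(show (scs ρ) z a from h1 ▸ ⟨1, by simp⟩), (scs ρ).refl b⟩)
    · by_cases h2 : ρ z = b
      · have : (Equiv.swap a b * ρ) z = a := by simp [Equiv.Perm.mul_apply, h2]
        rw [this]
        exact Or.inr (Or.inr ⟨(show (scs ρ) z b from h2 ▸ ⟨1, by simp⟩), (scs ρ).refl a⟩)
      · have : (Equiv.swap a b * ρ) z = ρ z := by
          simp [Equiv.Perm.mul_apply, Equiv.swap_apply_of_ne_of_ne h1 h2]
        rw [this]
        exact Or.inl ⟨1, by simp⟩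
  obtain ⟨n, -, rfl⟩ := h.exists_pow_eq'
  set σ := Equiv.swap a b * ρ
  clear h
  induction n with
  | zero => exact (addPair (scs ρ) a b).refl x
  | succ n ih =>
    have hp : (σ ^ (n + 1)) x = σ ((σ ^ n) x) := by
      rw [pow_succ' σ n, Equiv.Perm.mul_apply]
    rw [hp]
    exact (addPair (scs ρ) a b).trans ih (step ((σ ^ n) x))

end SC

section SC2
variable {α : Type*} [DecidableEq α] [Fintype α]

theorem addPair_scs_eq (ρ : Perm α) (a b : α) :
    addPair (scs ρ) a b = addPair (scs (Equiv.swap a b * ρ)) a b := by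
  have hρ : Equiv.swap a b * (Equiv.swap a b * ρ) = ρ := by
    rw [← mul_assoc, Equiv.swap_mul_self, one_mul]
  apply le_antisymm
  · refine addPair_le (Setoid.le_def.mpr fun {x y} h => ?_) (addPair_rel_ab _ a b)
    have h' : (Equiv.swap a b * (Equiv.swap a b * ρ)).SameCycle x y := by rw [hρ]; exact h
    exact sameCycle_swap_mul_le_addPair (Equiv.swap a b * ρ) a b h'
  · refine addPair_le (Setoid.le_def.mpr fun {x y} h => ?_) (addPair_rel_ab _ a b)
    exact sameCycle_swap_mul_le_addPair ρ a b h

/-- the number of orbits, counted via cycle factors -/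
theorem cycN_eq_card (σ : Perm α) :
    cycN σ + σ.support.card = Fintype.card α + σ.cycleFactorsFinset.card := by
  classical
  have key : Quotient (scs σ) ≃ ({x : α // σ x = x} ⊕ {c // c ∈ σ.cycleFactorsFinset}) := by
    refine Equiv.ofBijective (Quotient.lift (fun x =>
      if h : σ x = x then Sum.inl ⟨x, h⟩ else
        Sum.inr ⟨σ.cycleOf x, cycleOf_mem_cycleFactorsFinset_iff.mpr (mem_support.mpr h)⟩) ?_)
      ⟨?_, ?_⟩
    · intro x y hxy
      by_cases hx : σ x = x
      · have hyx : y = x := by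
          obtain ⟨i, rfl⟩ := hxy
          exact zpow_apply_eq_self_of_apply_eq_self hx i
        subst hyx; rfl
      · have hy : ¬ σ y = y := by
          intro hy
          obtain ⟨i, hi⟩ := (scs σ).symm hxy
          apply hx
          rw [← hi, ← Equiv.Perm.mul_apply, ← zpow_one_add, add_comm, zpow_add, zpow_one,
            Equiv.Perm.mul_apply, hy]
        simp only [dif_neg hx, dif_neg hy]
        exact congrArg _ (Subtype.ext (Equiv.Perm.SameCycle.cycleOf_eq hxy))
    · intro q1 q2
      refine Quotient.inductionOn₂ q1 q2 fun x y h => ?_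
      simp only [Quotient.lift_mk] at h
      by_cases hx : σ x = x <;> by_cases hy : σ y = y
      · rw [dif_pos hx, dif_pos hy] at h
        obtain rfl : x = y := by simpa using h
        rfl
      · rw [dif_pos hx, dif_neg hy] at h; simp at h
      · rw [dif_neg hx, dif_pos hy] at h; simp at h
      · rw [dif_neg hx, dif_neg hy] at h
        simp only [Sum.inr.injEq, Subtype.mk.injEq] at h
        refine Quotient.sound ?_
        have hmem : y ∈ (σ.cycleOf x).support := by
          rw [h]
          exact mem_support_cycleOf_iff.mpr
            ⟨Equiv.Perm.SameCycle.refl σ y, mem_support.mpr hy⟩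
        exact (mem_support_cycleOf_iff.mp hmem).1
    · rintro (⟨x, hx⟩ | ⟨c, hc⟩)
      · exact ⟨Quotient.mk _ x, by simp only [Quotient.lift_mk, dif_pos hx]⟩
      · obtain ⟨x, hx, -⟩ := (mem_cycleFactorsFinset_iff.mp hc).1
        have hcx : c = σ.cycleOf x := cycle_is_cycleOf (mem_support.mpr hx) hc
        have hσx : ¬ σ x = x := by
          intro h
          exact hx (((mem_cycleFactorsFinset_iff.mp hc).2 x (mem_support.mpr hx)).trans h)
        refine ⟨Quotient.mk _ x, ?_⟩
        simp only [Quotient.lift_mk, dif_neg hσx]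
        exact congrArg _ (Subtype.ext hcx.symm)
  have h1 : cycN σ = Fintype.card {x : α // σ x = x} + σ.cycleFactorsFinset.card := by
    rw [cycN, Nat.card_congr key, Nat.card_sum, Nat.card_eq_fintype_card,
      Nat.card_eq_fintype_card, Fintype.card_coe]
  have h2 : Fintype.card {x : α // σ x = x} + σ.support.card = Fintype.card α := by
    rw [Fintype.card_subtype, Equiv.Perm.support]
    have := Finset.card_filter_add_card_filter_not
      (s := (Finset.univ : Finset α)) (p := fun x => σ x = x)
    simpa using this
  omega

end SC2

theorem neg_one_pow_parity {a b : ℕ} (h : a % 2 = b % 2) : ((-1 : ℤˣ) ^ a = (-1) ^ b) := by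
  rcases Nat.even_or_odd a with ha | ha
  · have hb : Even b := by rcases ha with ⟨t, ht⟩; exact (Nat.even_iff).mpr (by omega)
    rw [ha.neg_one_pow, hb.neg_one_pow]
  · have hb : Odd b := by rcases ha with ⟨t, ht⟩; exact (Nat.odd_iff).mpr (by omega)
    rw [ha.neg_one_pow, hb.neg_one_pow]

section SC3
variable {α : Type*} [DecidableEq α] [Fintype α]

theorem sign_eq_cycN (σ : Perm α) :
    Equiv.Perm.sign σ = (-1 : ℤˣ) ^ (Fintype.card α + cycN σ) := by
  have h4 := cycN_eq_card σ
  have hct : Multiset.card σ.cycleType = σ.cycleFactorsFinset.card := by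
    rw [Equiv.Perm.cycleType_def, Multiset.card_map]; rfl
  rw [Equiv.Perm.sign_of_cycleType, Equiv.Perm.sum_cycleType, hct]
  exact (neg_one_pow_parity (by omega)).symm

theorem cycN_swap_mul_cases (ρ : Perm α) {a b : α} (hab : a ≠ b) :
    (¬ ρ.SameCycle a b ∧ cycN ρ = cycN (Equiv.swap a b * ρ) + 1) ∨
    (ρ.SameCycle a b ∧ cycN (Equiv.swap a b * ρ) = cycN ρ + 1) := by
  set ρ' := Equiv.swap a b * ρ with hρ'
  have hne : cycN ρ' ≠ cycN ρ := by
    intro h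
    have hsign : Equiv.Perm.sign ρ' = -1 * Equiv.Perm.sign ρ := by
      rw [hρ', Equiv.Perm.sign_mul, Equiv.Perm.sign_swap hab]
    rw [sign_eq_cycN, sign_eq_cycN, h] at hsign
    have h1 : (1 : ℤˣ) * ((-1 : ℤˣ) ^ (Fintype.card α + cycN ρ)) =
        (-1) * ((-1 : ℤˣ) ^ (Fintype.card α + cycN ρ)) := by
      rw [one_mul]; exact hsign
    have := mul_right_cancel h1
    simp at this
  have hJ := addPair_scs_eq ρ a b
  by_cases hr : ρ.SameCycle a b <;> by_cases hs : ρ'.SameCycle a b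
  · exfalso
    apply hne
    have : scs ρ = scs ρ' := by
      rw [← addPair_eq_self (r := scs ρ) (a := a) (b := b) hr, hJ,
        addPair_eq_self (r := scs ρ') (a := a) (b := b) hs]
    rw [cycN, cycN, this]
  · right
    refine ⟨hr, ?_⟩
    have h2 : cycN ρ' = Nat.card (Quotient (addPair (scs ρ') a b)) + 1 :=
      card_addPair (r := scs ρ') hs
    rw [h2, ← hJ, addPair_eq_self (r := scs ρ) hr]; rfl
  · left
    refine ⟨hr, ?_⟩
    have h2 : cycN ρ = Nat.card (Quotient (addPair (scs ρ) a b)) + 1 :=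
      card_addPair (r := scs ρ) hr
    rw [h2, hJ, addPair_eq_self (r := scs ρ') hs]; rfl
  · exfalso
    apply hne
    have h2 : cycN ρ = Nat.card (Quotient (addPair (scs ρ) a b)) + 1 :=
      card_addPair (r := scs ρ) hr
    have h3 : cycN ρ' = Nat.card (Quotient (addPair (scs ρ') a b)) + 1 :=
      card_addPair (r := scs ρ') hs
    rw [h2, h3, hJ]

theorem cycN_merge {ρ : Perm α} {a b : α} (h : ¬ ρ.SameCycle a b) :
    cycN ρ = cycN (Equiv.swap a b * ρ) + 1 := by
  have hab : a ≠ b := fun hab => h (hab ▸ Equiv.Perm.SameCycle.refl ρ a)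
  rcases cycN_swap_mul_cases ρ hab with ⟨-, h2⟩ | ⟨h1, -⟩
  · exact h2
  · exact absurd h1 h

theorem cycN_split {ρ : Perm α} {a b : α} (hab : a ≠ b) (h : ρ.SameCycle a b) :
    cycN (Equiv.swap a b * ρ) = cycN ρ + 1 := by
  rcases cycN_swap_mul_cases ρ hab with ⟨h1, -⟩ | ⟨-, h2⟩
  · exact absurd h h1
  · exact h2

theorem cycN_le_swap_mul_add_one (ρ : Perm α) (a b : α) :
    cycN ρ ≤ cycN (Equiv.swap a b * ρ) + 1 := by
  by_cases hab : a = b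
  · subst hab
    rw [Equiv.swap_self]
    have : (Equiv.refl α : Perm α) * ρ = ρ := Equiv.ext fun x => rfl
    rw [this]; omega
  · rcases cycN_swap_mul_cases ρ hab with ⟨-, h2⟩ | ⟨-, h2⟩ <;> omega

end SC3

section SC4
variable {α : Type*} [DecidableEq α] [Fintype α]

theorem cycN_one : cycN (1 : Perm α) = Fintype.card α := by
  have key : Quotient (scs (1 : Perm α)) ≃ α := by
    refine Equiv.ofBijective (Quotient.lift (fun x => x) ?_) ⟨?_, ?_⟩
    · intro x y ⟨i, hi⟩
      simpa using hi
    · intro q1 q2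
      refine Quotient.inductionOn₂ q1 q2 fun x y h => ?_
      simp only [Quotient.lift_mk] at h
      exact h ▸ rfl
    · exact fun x => ⟨Quotient.mk _ x, rfl⟩
  rw [cycN, Nat.card_congr key, Nat.card_eq_fintype_card]

theorem exists_swap_list (σ : Perm α) :
    ∃ L : List (Perm α), (∀ τ ∈ L, Equiv.Perm.IsSwap τ) ∧ σ = L.prod ∧
      L.length + cycN σ = Fintype.card α := by
  classical
  suffices h : ∀ n (σ : Perm α), σ.support.card ≤ n → ∃ L : List (Perm α),
      (∀ τ ∈ L, Equiv.Perm.IsSwap τ) ∧ σ = L.prod ∧ L.length + cycN σ = Fintype.card α from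
    h σ.support.card σ le_rfl
  intro n
  induction n with
  | zero =>
    intro σ hσ
    have : σ = 1 := by
      rw [← Equiv.Perm.support_eq_empty_iff]
      exact Finset.card_eq_zero.mp (Nat.le_zero.mp hσ)
    subst this
    exact ⟨[], by simp, by simp, by simp [cycN_one]⟩
  | succ n ih =>
    intro σ hσ
    by_cases h1 : σ = 1
    · subst h1
      exact ⟨[], by simp, by simp, by simp [cycN_one]⟩
    · obtain ⟨x, hx⟩ : ∃ x, σ x ≠ x := by
        by_contra h
        push_neg at h
        exact h1 (Equiv.ext h)
      have hxs : x ≠ σ x := fun h => hx h.symm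
      have hsc : σ.SameCycle x (σ x) := ⟨1, by simp⟩
      have hsplit := cycN_split hxs hsc
      have hsupp : (Equiv.swap x (σ x) * σ).support.card ≤ n := by
        have := Equiv.Perm.card_support_swap_mul (f := σ) (x := x) hx
        omega
      obtain ⟨L, hL1, hL2, hL3⟩ := ih (Equiv.swap x (σ x) * σ) hsupp
      refine ⟨Equiv.swap x (σ x) :: L, ?_, ?_, ?_⟩
      · intro τ hτ
        rcases List.mem_cons.mp hτ with rfl | hτ
        · exact ⟨x, σ x, hxs, rfl⟩
        · exact hL1 τ hτ
      · rw [List.prod_cons, ← hL2, ← mul_assoc, Equiv.swap_mul_self, one_mul]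
      · simp only [List.length_cons]
        omega
  

theorem cycN_le_list_prod_mul (L : List (Perm α)) (hL : ∀ τ ∈ L, Equiv.Perm.IsSwap τ)
    (ρ : Perm α) : cycN ρ ≤ cycN (L.prod * ρ) + L.length := by
  induction L generalizing ρ with
  | nil => simp
  | cons τ L ih =>
    obtain ⟨a, b, -, rfl⟩ := hL τ (by simp)
    have h1 : cycN ρ ≤ cycN (L.prod * ρ) + L.length := ih (fun τ hτ => hL τ (by simp [hτ])) ρ
    have h2 : cycN (L.prod * ρ) ≤ cycN (Equiv.swap a b * (L.prod * ρ)) + 1 :=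
      cycN_le_swap_mul_add_one _ a b
    rw [List.prod_cons, mul_assoc]
    simp only [List.length_cons]
    omega

/-- triangle inequality for cycle counting -/
theorem cycN_triangle (σ τ : Perm α) :
    cycN τ ≤ cycN (σ * τ) + (Fintype.card α - cycN σ) := by
  obtain ⟨L, hL1, hL2, hL3⟩ := exists_swap_list σ
  have := cycN_le_list_prod_mul L hL1 τ
  rw [← hL2] at this
  omega

theorem cycN_le_card (σ : Perm α) : cycN σ ≤ Fintype.card α := by
  rw [cycN, ← Nat.card_eq_fintype_card]
  exact Nat.card_le_card_of_surjective (Quotient.mk _) (Quotient.mk_surjective)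

end SC4

section SC5
variable {α β : Type*}

def permCongrHom (e : α ≃ β) : Perm α →* Perm β where
  toFun := e.permCongr
  map_one' := by ext x; simp
  map_mul' σ τ := by ext x; simp [Equiv.permCongr_apply, Equiv.Perm.mul_apply]

theorem permCongr_zpow (e : α ≃ β) (σ : Perm α) (i : ℤ) :
    (e.permCongr σ) ^ i = e.permCongr (σ ^ i) := by
  have : e.permCongr σ = _root_.permCongrHom e σ := rfl
  rw [this, ← map_zpow]; rfl

theorem sameCycle_permCongr (e : α ≃ β) (σ : Perm α) (x y : β) :
    (e.permCongr σ).SameCycle x y ↔ σ.SameCycle (e.symm x) (e.symm y) := by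
  constructor
  · rintro ⟨i, hi⟩
    refine ⟨i, ?_⟩
    rw [permCongr_zpow] at hi
    simp only [Equiv.permCongr_apply] at hi
    rw [← hi]; simp
  · rintro ⟨i, hi⟩
    refine ⟨i, ?_⟩
    rw [permCongr_zpow]
    simp only [Equiv.permCongr_apply, hi]
    simp

theorem cycN_permCongr (e : α ≃ β) (σ : Perm α) : cycN (e.permCongr σ) = cycN σ := by
  have key : Quotient (scs σ) ≃ Quotient (scs (e.permCongr σ)) := by
    refine Equiv.ofBijective (Quotient.lift
      (fun x => Quotient.mk (scs (e.permCongr σ)) (e x)) ?_) ⟨?_, ?_⟩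
    · intro x y hxy
      refine Quotient.sound ?_
      show (e.permCongr σ).SameCycle (e x) (e y)
      rw [sameCycle_permCongr]
      simpa using (show σ.SameCycle x y from hxy)
    · intro q1 q2
      refine Quotient.inductionOn₂ q1 q2 fun x y h => ?_
      simp only [Quotient.lift_mk] at h
      refine Quotient.sound ?_
      have := Quotient.exact h
      have h2 := (sameCycle_permCongr e σ (e x) (e y)).mp this
      exact (show σ.SameCycle x y by simpa using h2)
    · intro q
      refine Quotient.inductionOn q fun x => ⟨Quotient.mk _ (e.symm x), ?_⟩
      simp only [Quotient.lift_mk, Equiv.apply_symm_apply]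
  rw [cycN, cycN, Nat.card_congr key]

theorem sumCongr_zpow (σ₁ : Perm α) (σ₂ : Perm β) (i : ℤ) :
    (Equiv.sumCongr σ₁ σ₂) ^ i = Equiv.sumCongr (σ₁ ^ i) (σ₂ ^ i) := by
  have h : Equiv.sumCongr σ₁ σ₂ = Equiv.Perm.sumCongrHom α β (σ₁, σ₂) := rfl
  rw [h, ← map_zpow]
  rfl

theorem sameCycle_sumCongr_inl_inl (σ₁ : Perm α) (σ₂ : Perm β) (x y : α) :
    Equiv.Perm.SameCycle (Equiv.sumCongr σ₁ σ₂) (Sum.inl x) (Sum.inl y) ↔ σ₁.SameCycle x y := by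
  constructor
  · rintro ⟨i, hi⟩
    rw [sumCongr_zpow] at hi
    simp only [Equiv.sumCongr_apply, Sum.map_inl, Sum.inl.injEq] at hi
    exact ⟨i, hi⟩
  · rintro ⟨i, hi⟩
    exact ⟨i, by rw [sumCongr_zpow]; simp [hi]⟩

theorem sameCycle_sumCongr_inr_inr (σ₁ : Perm α) (σ₂ : Perm β) (x y : β) :
    Equiv.Perm.SameCycle (Equiv.sumCongr σ₁ σ₂) (Sum.inr x) (Sum.inr y) ↔ σ₂.SameCycle x y := by
  constructor
  · rintro ⟨i, hi⟩
    rw [sumCongr_zpow] at hi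
    simp only [Equiv.sumCongr_apply, Sum.map_inr, Sum.inr.injEq] at hi
    exact ⟨i, hi⟩
  · rintro ⟨i, hi⟩
    exact ⟨i, by rw [sumCongr_zpow]; simp [hi]⟩

theorem not_sameCycle_sumCongr_inl_inr (σ₁ : Perm α) (σ₂ : Perm β) (x : α) (y : β) :
    ¬ Equiv.Perm.SameCycle (Equiv.sumCongr σ₁ σ₂) (Sum.inl x) (Sum.inr y) := by
  rintro ⟨i, hi⟩
  rw [sumCongr_zpow] at hi
  simp only [Equiv.sumCongr_apply, Sum.map_inl] at hi
  exact Sum.inl_ne_inr hi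

theorem cycN_sumCongr [Finite α] [Finite β] (σ₁ : Perm α) (σ₂ : Perm β) :
    cycN (Equiv.sumCongr σ₁ σ₂) = cycN σ₁ + cycN σ₂ := by
  have key : Quotient (scs (Equiv.sumCongr σ₁ σ₂)) ≃ (Quotient (scs σ₁) ⊕ Quotient (scs σ₂)) := by
    refine Equiv.ofBijective (Quotient.lift (Sum.elim
      (fun x => Sum.inl (Quotient.mk (scs σ₁) x))
      (fun y => Sum.inr (Quotient.mk (scs σ₂) y))) ?_) ⟨?_, ?_⟩
    · rintro (x | x) (y | y) hxy
      · exact congrArg Sum.inl (Quotient.sound ((sameCycle_sumCongr_inl_inl σ₁ σ₂ x y).mp hxy))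
      · exact absurd hxy (not_sameCycle_sumCongr_inl_inr σ₁ σ₂ x y)
      · exact absurd ((scs (Equiv.sumCongr σ₁ σ₂ : Perm (α ⊕ β))).symm hxy)
          (not_sameCycle_sumCongr_inl_inr σ₁ σ₂ y x)
      · exact congrArg Sum.inr (Quotient.sound ((sameCycle_sumCongr_inr_inr σ₁ σ₂ x y).mp hxy))
    · intro q1 q2
      refine Quotient.inductionOn₂ q1 q2 fun u v h => ?_
      rcases u with x | x <;> rcases v with y | y
      · simp only [Quotient.lift_mk, Sum.elim_inl, Sum.inl.injEq] at h
        exact Quotient.sound ((sameCycle_sumCongr_inl_inl σ₁ σ₂ x y).mpr (Quotient.exact h))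
      · simp at h
      · simp at h
      · simp only [Quotient.lift_mk, Sum.elim_inr, Sum.inr.injEq] at h
        exact Quotient.sound ((sameCycle_sumCongr_inr_inr σ₁ σ₂ x y).mpr (Quotient.exact h))
    · rintro (q | q)
      · exact Quotient.inductionOn q fun x => ⟨Quotient.mk _ (Sum.inl x), rfl⟩
      · exact Quotient.inductionOn q fun y => ⟨Quotient.mk _ (Sum.inr y), rfl⟩
  rw [cycN, Nat.card_congr key, Nat.card_sum, cycN, cycN]

end SC5

theorem cycN_finRotate {n : ℕ} (hn : 1 ≤ n) : cycN (finRotate n) = 1 := by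
  rcases eq_or_lt_of_le hn with h1 | h2
  · have : Subsingleton (Quotient (scs (finRotate n))) := by
      subst h1
      exact Quotient.instSubsingletonQuotient _
    have : Nonempty (Quotient (scs (finRotate n))) := ⟨Quotient.mk _ ⟨0, by omega⟩⟩
    rw [cycN]
    exact Nat.card_eq_one_iff_unique.mpr ⟨‹_›, ‹_›⟩
  · obtain ⟨k, rfl⟩ : ∃ k, n = k + 2 := ⟨n - 2, by omega⟩
    have hfix : ∀ x : Fin (k + 2), finRotate (k + 2) x ≠ x := by
      intro x
      have : x ∈ Equiv.Perm.support (finRotate (k + 2)) := by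
        rw [support_finRotate]; exact Finset.mem_univ x
      exact Equiv.Perm.mem_support.mp this
    have hsub : Subsingleton (Quotient (scs (finRotate (k + 2)))) := by
      constructor
      intro q1 q2
      refine Quotient.inductionOn₂ q1 q2 fun x y => ?_
      exact Quotient.sound (isCycle_finRotate.sameCycle (hfix x) (hfix y))
    have hne : Nonempty (Quotient (scs (finRotate (k + 2)))) := ⟨Quotient.mk _ 0⟩
    rw [cycN]
    exact Nat.card_eq_one_iff_unique.mpr ⟨hsub, hne⟩

/-- the setoid of "same cycle of σ". -/
def sameCycleSetoid {k : ℕ} (σ : Equiv.Perm (Fin k)) : Setoid (Fin k) :=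
  ⟨σ.SameCycle, ⟨fun _ => Equiv.Perm.SameCycle.refl σ _, fun h => h.symm, fun h h' => h.trans h'⟩⟩

/-- number of orbits of a permutation (fixed points included). -/
noncomputable def cyc {k : ℕ} (σ : Equiv.Perm (Fin k)) : ℕ :=
  Nat.card (Quotient (sameCycleSetoid σ))

/-- reflection length `ℓ(σ) = k − c(σ)`. -/
noncomputable def plen {k : ℕ} (σ : Equiv.Perm (Fin k)) : ℤ := (k : ℤ) - cyc σ

/-- the geodesic (absolute) order on permutations: `τ ≤ σ` iff `ℓ(τ) + ℓ(τ⁻¹σ) = ℓ(σ)`. -/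
def permLe {k : ℕ} (τ σ : Equiv.Perm (Fin k)) : Prop := plen τ + plen (τ⁻¹ * σ) = plen σ

/-- `σ₁ ⊕ σ₂`, acting as `σ₁` on `{1,…,l}` and as the shifted copy of `σ₂` on `{l+1,…,l+m}`. -/
def sumPerm {l m : ℕ} (σ₁ : Equiv.Perm (Fin l)) (σ₂ : Equiv.Perm (Fin m)) :
    Equiv.Perm (Fin (l + m)) :=
  finSumFinEquiv.permCongr (Equiv.sumCongr σ₁ σ₂)

theorem cyc_eq_cycN {k : ℕ} (σ : Equiv.Perm (Fin k)) : cyc σ = cycN σ := rfl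

theorem cyc_sumPerm {l m : ℕ} (σ₁ : Equiv.Perm (Fin l)) (σ₂ : Equiv.Perm (Fin m)) :
    cyc (sumPerm σ₁ σ₂) = cyc σ₁ + cyc σ₂ := by
  rw [cyc_eq_cycN, cyc_eq_cycN, cyc_eq_cycN, sumPerm, cycN_permCongr, cycN_sumCongr]

theorem sumPerm_inv {l m : ℕ} (σ₁ : Equiv.Perm (Fin l)) (σ₂ : Equiv.Perm (Fin m)) :
    (sumPerm σ₁ σ₂)⁻¹ = sumPerm σ₁⁻¹ σ₂⁻¹ := by
  have h : sumPerm σ₁ σ₂ =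
      _root_.permCongrHom finSumFinEquiv (Equiv.Perm.sumCongrHom (Fin l) (Fin m) (σ₁, σ₂)) := rfl
  rw [h, ← map_inv, ← map_inv]
  rfl

theorem sumPerm_mul {l m : ℕ} (σ₁ τ₁ : Equiv.Perm (Fin l)) (σ₂ τ₂ : Equiv.Perm (Fin m)) :
    sumPerm σ₁ σ₂ * sumPerm τ₁ τ₂ = sumPerm (σ₁ * τ₁) (σ₂ * τ₂) := by
  have h : ∀ (a : Equiv.Perm (Fin l)) (b : Equiv.Perm (Fin m)), sumPerm a b =
      _root_.permCongrHom finSumFinEquiv (Equiv.Perm.sumCongrHom (Fin l) (Fin m) (a, b)) :=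
    fun a b => rfl
  rw [h, h, h, ← map_mul, ← map_mul]
  rfl

theorem sumPerm_apply_castAdd {l m : ℕ} (σ₁ : Equiv.Perm (Fin l)) (σ₂ : Equiv.Perm (Fin m))
    (i : Fin l) : sumPerm σ₁ σ₂ (Fin.castAdd m i) = Fin.castAdd m (σ₁ i) := by
  rw [sumPerm, Equiv.permCongr_apply, finSumFinEquiv_symm_apply_castAdd]
  simp

theorem sumPerm_apply_natAdd {l m : ℕ} (σ₁ : Equiv.Perm (Fin l)) (σ₂ : Equiv.Perm (Fin m))
    (j : Fin m) : sumPerm σ₁ σ₂ (Fin.natAdd l j) = Fin.natAdd l (σ₂ j) := by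
  rw [sumPerm, Equiv.permCongr_apply, finSumFinEquiv_symm_apply_natAdd]
  simp

theorem not_sameCycle_sumPerm {l m : ℕ} (ρ₁ : Equiv.Perm (Fin l)) (ρ₂ : Equiv.Perm (Fin m))
    (i : Fin l) (j : Fin m) :
    ¬ (sumPerm ρ₁ ρ₂).SameCycle (Fin.castAdd m i) (Fin.natAdd l j) := by
  intro h
  rw [sumPerm, sameCycle_permCongr, finSumFinEquiv_symm_apply_castAdd,
    finSumFinEquiv_symm_apply_natAdd] at h
  exact not_sameCycle_sumCongr_inl_inr ρ₁ ρ₂ i j h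

theorem finRotate_val {n : ℕ} (x : Fin (n + 1)) :
    (finRotate (n + 1) x).val = (x.val + 1) % (n + 1) := by
  rw [finRotate_succ_apply, Fin.val_add, Fin.val_one', Nat.add_mod_mod]

theorem finRotate_decomp (a b : ℕ) :
    finRotate (a + 1 + (b + 1)) =
      Equiv.swap (⟨0, by omega⟩ : Fin (a + 1 + (b + 1))) ⟨a + 1, by omega⟩ *
        sumPerm (finRotate (a + 1)) (finRotate (b + 1)) := by
  have hval2 : ∀ z : Fin (a + 1 + (b + 1)),
      (finRotate (a + 1 + (b + 1)) z).val = (z.val + 1) % (a + 1 + (b + 1)) := fun z =>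
    finRotate_val (n := a + 1 + b) z
  apply Equiv.ext
  intro x
  rw [Equiv.Perm.mul_apply]
  by_cases hx : x.val < a + 1
  · have hxe : x = Fin.castAdd (b + 1) ⟨x.val, hx⟩ := Fin.ext rfl
    rw [hxe, sumPerm_apply_castAdd]
    have hyval : (finRotate (a + 1) ⟨x.val, hx⟩).val = (x.val + 1) % (a + 1) :=
      finRotate_val _
    by_cases hva : x.val = a
    · have h0 : Fin.castAdd (b + 1) (finRotate (a + 1) ⟨x.val, hx⟩) =
          (⟨0, by omega⟩ : Fin (a + 1 + (b + 1))) := by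
        apply Fin.ext
        show (finRotate (a + 1) ⟨x.val, hx⟩).val = 0
        rw [hyval]
        have h5 : x.val + 1 = a + 1 := by omega
        rw [h5, Nat.mod_self]
      rw [h0, Equiv.swap_apply_left]
      apply Fin.ext
      rw [hval2]
      show (x.val + 1) % (a + 1 + (b + 1)) = a + 1
      have h5 : x.val + 1 = a + 1 := by omega
      rw [h5, Nat.mod_eq_of_lt (by omega)]
    · have hlt : x.val + 1 < a + 1 := by omega
      have hyv : (finRotate (a + 1) ⟨x.val, hx⟩).val = x.val + 1 := by
        rw [hyval, Nat.mod_eq_of_lt hlt]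
      have hne0 : Fin.castAdd (b + 1) (finRotate (a + 1) ⟨x.val, hx⟩) ≠
          (⟨0, by omega⟩ : Fin (a + 1 + (b + 1))) := by
        intro h
        have h7 : (finRotate (a + 1) ⟨x.val, hx⟩).val = 0 := congrArg Fin.val h
        rw [hyv] at h7
        omega
      have hne1 : Fin.castAdd (b + 1) (finRotate (a + 1) ⟨x.val, hx⟩) ≠
          (⟨a + 1, by omega⟩ : Fin (a + 1 + (b + 1))) := by
        intro h
        have h7 : (finRotate (a + 1) ⟨x.val, hx⟩).val = a + 1 := congrArg Fin.val h
        rw [hyv] at h7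
        omega
      rw [Equiv.swap_apply_of_ne_of_ne hne0 hne1]
      apply Fin.ext
      rw [hval2]
      show (x.val + 1) % (a + 1 + (b + 1)) = (finRotate (a + 1) ⟨x.val, hx⟩).val
      rw [hyv]
      exact Nat.mod_eq_of_lt (by omega)
  · have hw : x.val - (a + 1) < b + 1 := by
      have := x.isLt
      omega
    have hxe : x = Fin.natAdd (a + 1) ⟨x.val - (a + 1), hw⟩ := by
      apply Fin.ext
      show x.val = a + 1 + (x.val - (a + 1))
      omega
    rw [hxe, sumPerm_apply_natAdd]
    have hyval : (finRotate (b + 1) ⟨x.val - (a + 1), hw⟩).val =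
        (x.val - (a + 1) + 1) % (b + 1) := finRotate_val _
    by_cases hvb : x.val - (a + 1) = b
    · have h1 : Fin.natAdd (a + 1) (finRotate (b + 1) ⟨x.val - (a + 1), hw⟩) =
          (⟨a + 1, by omega⟩ : Fin (a + 1 + (b + 1))) := by
        apply Fin.ext
        show a + 1 + (finRotate (b + 1) ⟨x.val - (a + 1), hw⟩).val = a + 1
        rw [hyval]
        have h5 : x.val - (a + 1) + 1 = b + 1 := by omega
        rw [h5, Nat.mod_self]
      rw [h1, Equiv.swap_apply_right]
      apply Fin.ext
      rw [hval2]
      show (a + 1 + (x.val - (a + 1)) + 1) % (a + 1 + (b + 1)) = 0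
      have h5 : a + 1 + (x.val - (a + 1)) + 1 = a + 1 + (b + 1) := by omega
      rw [h5, Nat.mod_self]
    · have hlt : x.val - (a + 1) + 1 < b + 1 := by omega
      have hyv : (finRotate (b + 1) ⟨x.val - (a + 1), hw⟩).val = x.val - (a + 1) + 1 := by
        rw [hyval, Nat.mod_eq_of_lt hlt]
      have hne0 : Fin.natAdd (a + 1) (finRotate (b + 1) ⟨x.val - (a + 1), hw⟩) ≠
          (⟨0, by omega⟩ : Fin (a + 1 + (b + 1))) := by
        intro h
        have h7 : a + 1 + (finRotate (b + 1) ⟨x.val - (a + 1), hw⟩).val = 0 :=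
          congrArg Fin.val h
        rw [hyv] at h7
        omega
      have hne1 : Fin.natAdd (a + 1) (finRotate (b + 1) ⟨x.val - (a + 1), hw⟩) ≠
          (⟨a + 1, by omega⟩ : Fin (a + 1 + (b + 1))) := by
        intro h
        have h7 : a + 1 + (finRotate (b + 1) ⟨x.val - (a + 1), hw⟩).val = a + 1 :=
          congrArg Fin.val h
        rw [hyv] at h7
        omega
      rw [Equiv.swap_apply_of_ne_of_ne hne0 hne1]
      apply Fin.ext
      rw [hval2]
      show (a + 1 + (x.val - (a + 1)) + 1) % (a + 1 + (b + 1)) =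
        a + 1 + (finRotate (b + 1) ⟨x.val - (a + 1), hw⟩).val
      rw [hyv, Nat.mod_eq_of_lt (by omega)]
      omega

theorem sumPerm_le_rotate_iff {l m : ℕ} (hl : 1 ≤ l) (hm : 1 ≤ m)
    (σ₁ : Equiv.Perm (Fin l)) (σ₂ : Equiv.Perm (Fin m)) :
    permLe (sumPerm σ₁ σ₂) (finRotate (l + m)) ↔
      permLe σ₁ (finRotate l) ∧ permLe σ₂ (finRotate m) := by
  obtain ⟨a, rfl⟩ : ∃ a, l = a + 1 := ⟨l - 1, by omega⟩
  obtain ⟨b, rfl⟩ : ∃ b, m = b + 1 := ⟨m - 1, by omega⟩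
  have H1 : cyc (sumPerm σ₁ σ₂) = cyc σ₁ + cyc σ₂ := cyc_sumPerm σ₁ σ₂
  have H3 : cyc (finRotate (a + 1 + (b + 1))) = 1 := by
    rw [cyc_eq_cycN]; exact cycN_finRotate (by omega)
  have H4 : cyc (finRotate (a + 1)) = 1 := by
    rw [cyc_eq_cycN]; exact cycN_finRotate (by omega)
  have H5 : cyc (finRotate (b + 1)) = 1 := by
    rw [cyc_eq_cycN]; exact cycN_finRotate (by omega)
  have e0 : (sumPerm σ₁ σ₂)⁻¹ (⟨0, by omega⟩ : Fin (a + 1 + (b + 1))) =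
      Fin.castAdd (b + 1) (σ₁⁻¹ 0) := by
    have h0 : (⟨0, by omega⟩ : Fin (a + 1 + (b + 1))) = Fin.castAdd (b + 1) (0 : Fin (a + 1)) := by
      apply Fin.ext; simp
    rw [h0, sumPerm_inv, sumPerm_apply_castAdd]
  have e1 : (sumPerm σ₁ σ₂)⁻¹ (⟨a + 1, by omega⟩ : Fin (a + 1 + (b + 1))) =
      Fin.natAdd (a + 1) (σ₂⁻¹ 0) := by
    have h1 : (⟨a + 1, by omega⟩ : Fin (a + 1 + (b + 1))) =
        Fin.natAdd (a + 1) (0 : Fin (b + 1)) := by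
      apply Fin.ext; simp
    rw [h1, sumPerm_inv, sumPerm_apply_natAdd]
  have hcomp : (sumPerm σ₁ σ₂)⁻¹ * finRotate (a + 1 + (b + 1)) =
      Equiv.swap (Fin.castAdd (b + 1) (σ₁⁻¹ 0)) (Fin.natAdd (a + 1) (σ₂⁻¹ 0)) *
        sumPerm (σ₁⁻¹ * finRotate (a + 1)) (σ₂⁻¹ * finRotate (b + 1)) := by
    rw [finRotate_decomp a b, ← e0, ← e1, Equiv.swap_apply_apply, ← sumPerm_mul,
      ← sumPerm_inv]
    group
  have Hmerge : cyc (sumPerm (σ₁⁻¹ * finRotate (a + 1)) (σ₂⁻¹ * finRotate (b + 1))) =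
      cyc ((sumPerm σ₁ σ₂)⁻¹ * finRotate (a + 1 + (b + 1))) + 1 := by
    rw [hcomp, cyc_eq_cycN, cyc_eq_cycN]
    exact cycN_merge (not_sameCycle_sumPerm _ _ _ _)
  have H2 : cyc (σ₁⁻¹ * finRotate (a + 1)) + cyc (σ₂⁻¹ * finRotate (b + 1)) =
      cyc ((sumPerm σ₁ σ₂)⁻¹ * finRotate (a + 1 + (b + 1))) + 1 := by
    rw [← cyc_sumPerm, Hmerge]
  have T1 : cyc (σ₁⁻¹ * finRotate (a + 1)) + cyc σ₁ ≤ (a + 1) + 1 := by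
    have t := cycN_triangle σ₁ (σ₁⁻¹ * finRotate (a + 1))
    rw [mul_inv_cancel_left] at t
    have hb1 := cycN_le_card σ₁
    rw [Fintype.card_fin] at t hb1
    have h4' : cycN (finRotate (a + 1)) = 1 := cycN_finRotate (by omega)
    rw [cyc_eq_cycN, cyc_eq_cycN]
    omega
  have T2 : cyc (σ₂⁻¹ * finRotate (b + 1)) + cyc σ₂ ≤ (b + 1) + 1 := by
    have t := cycN_triangle σ₂ (σ₂⁻¹ * finRotate (b + 1))
    rw [mul_inv_cancel_left] at t
    have hb1 := cycN_le_card σ₂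
    rw [Fintype.card_fin] at t hb1
    have h4' : cycN (finRotate (b + 1)) = 1 := cycN_finRotate (by omega)
    rw [cyc_eq_cycN, cyc_eq_cycN]
    omega
  simp only [permLe, plen]
  rw [H1, H3, H4, H5]
  push_cast
  omega
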